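/- Let G be a directed weighted graph containing a negative-weight cycle reachable from a source r, and let C be such a cycle with the minimum number q of hops. If q > 2Γ and the canonical replacement cycle C̃ (obtained by replacing the q-hop path of C with the canonical q-hop-limited shortest path) contains vertices of V' spaced at most Γ hops apart, then the V'-vertices on C̃ in cyclic order form a cycle of negative total weight in the virtual digraph G' (where arc weights are Γ-limited distances in G). -/

import Mathlib

namespace Stmt16

variable {V : Type*}

/-- Endpoint of a walk starting at `u` with subsequent vertices given by the list. -/
def last : V → List V → V
  | u, [] => u
  | _, x :: xs => last x xs

/-- Weight of a directed walk starting at `u` (non-arcs have weight `⊤`). -/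
noncomputable def cost (w : V → V → EReal) : V → List V → EReal
  | _, [] => 0
  | u, x :: xs => w u x + cost w x xs

/-- `h`-hop-limited distance from `u` to `v`. -/
noncomputable def hdist (w : V → V → EReal) (h : ℕ) (u v : V) : EReal :=
  ⨅ p ∈ {p : List V | p.length ≤ h ∧ last u p = v}, cost w u p

/-- Shortest-path distance from `u` to `v`. -/
noncomputable def dist (w : V → V → EReal) (u v : V) : EReal :=
  ⨅ h : ℕ, hdist w h u v

lemma cost_append (w : V → V → EReal) (u : V) (xs ys : List V) :
    cost w u (xs ++ ys) = cost w u xs + cost w (last u xs) ys := by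
  induction xs generalizing u with
  | nil => simp [cost, last]
  | cons x xs ih => simp [cost, last, ih, add_assoc]

lemma hdist_le (w : V → V → EReal) (h : ℕ) (u v : V) (p : List V)
    (hlen : p.length ≤ h) (hlast : last u p = v) :
    hdist w h u v ≤ cost w u p :=
  iInf₂_le p ⟨hlen, hlast⟩

lemma last_eq_getLastD (l : List V) (u : V) : last u l = l.getLastD u := by
  induction l generalizing u with
  | nil => rfl
  | cons x xs ih =>
    rw [show last u (x :: xs) = last x xs from rfl, ih x, List.getLastD_cons]

lemma last_seg (L : List V) (d : V) :
    ∀ (n a : ℕ), a + n < L.length →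
      last (L.getD a d) ((L.drop (a+1)).take n) = L.getD (a + n) d := by
  intro n
  induction n with
  | zero => intro a _; simp [last]
  | succ n ih =>
    intro a ha
    have h1 : a + 1 < L.length := by omega
    rw [List.drop_eq_getElem_cons h1, List.take_succ_cons]
    show last L[a+1] ((L.drop (a+1+1)).take n) = L.getD (a + (n+1)) d
    have := ih (a+1) (by omega)
    rw [List.getD_eq_getElem L d h1] at this
    rw [this]
    congr 1
    omega

lemma getD_length (l : List V) (u : V) : (u :: l).getD l.length u = last u l := by
  induction l generalizing u with
  | nil => rfl
  | cons x xs ih =>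
    show (x :: xs).getD xs.length u = last x xs
    rw [List.getD_eq_getElem _ u (by simp), ← List.getD_eq_getElem _ x (by simp)]
    exact ih x

lemma le_getLastD_of_chain : ∀ (l : List ℕ) (a : ℕ),
    (a :: l).Chain' (fun x y => x < y) → a ≤ l.getLastD a := by
  intro l
  induction l with
  | nil => intro a _; simp
  | cons b t ih =>
    intro a h
    replace h := List.isChain_cons_cons.1 h
    have := ih b h.2
    rw [List.getLastD_cons]
    omega

lemma mem_le_getLastD_of_chain : ∀ (l : List ℕ) (d : ℕ),
    l.Chain' (fun x y => x < y) → ∀ x ∈ l, x ≤ l.getLastD d := by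
  intro l
  induction l with
  | nil => simp
  | cons a t ih =>
    intro d h x hx
    rw [List.getLastD_cons]
    rcases List.mem_cons.1 hx with rfl | hx
    · exact le_getLastD_of_chain t x h
    · exact ih a h.tail x hx

lemma sampled_cost_le [DecidableEq V] (w : V → V → EReal) (Γ : ℕ) (V' : Finset V) (w' : V → V → EReal)
    (hw' : ∀ u v, w' u v = if u ∈ V' ∧ v ∈ V' then hdist w Γ u v else ⊤)
    (L : List V) (d : V) :
    ∀ (js' : List ℕ) (a : ℕ),
      (a :: js').Chain' (fun x y => x < y ∧ y - x ≤ Γ) →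
      (∀ x ∈ a :: js', x < L.length) →
      (∀ x ∈ a :: js', L.getD x d ∈ V') →
      cost w' (L.getD a d) (js'.map fun j => L.getD j d) ≤
        cost w (L.getD a d) ((L.drop (a+1)).take (js'.getLastD a - a)) := by
  intro js'
  induction js' with
  | nil => intro a _ _ _; simp [cost]
  | cons b rest ih =>
    intro a hchain hlt hV'
    have hab : a < b ∧ b - a ≤ Γ := (List.isChain_cons_cons.1 hchain).1
    have htail : (b :: rest).Chain' (fun x y => x < y ∧ y - x ≤ Γ) :=
      (List.isChain_cons_cons.1 hchain).2
    have hbL : b < L.length := hlt b (by simp)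
    have hbc : b ≤ rest.getLastD b :=
      le_getLastD_of_chain rest b (htail.imp fun _ _ hp => hp.1)
    set c := rest.getLastD b with hc
    -- segment from a to b
    have hseglen : ((L.drop (a+1)).take (b - a)).length ≤ Γ := by
      rw [List.length_take]
      omega
    have hseglast : last (L.getD a d) ((L.drop (a+1)).take (b - a)) = L.getD b d := by
      have := last_seg L d (b - a) a (by omega)
      rwa [show a + (b - a) = b by omega] at this
    have h1 : w' (L.getD a d) (L.getD b d) ≤ cost w (L.getD a d) ((L.drop (a+1)).take (b - a)) := by
      rw [hw', if_pos ⟨hV' a (by simp), hV' b (by simp)⟩]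
      exact hdist_le _ _ _ _ _ hseglen hseglast
    have h2 : cost w' (L.getD b d) (rest.map fun j => L.getD j d) ≤
        cost w (L.getD b d) ((L.drop (b+1)).take (c - b)) :=
      ih b htail (fun x hx => hlt x (List.mem_cons_of_mem a hx))
        (fun x hx => hV' x (List.mem_cons_of_mem a hx))
    have hsplit : (L.drop (a+1)).take (c - a) =
        (L.drop (a+1)).take (b - a) ++ (L.drop (b+1)).take (c - b) := by
      rw [show c - a = (b - a) + (c - b) by omega, List.take_add, List.drop_drop,
        show (a + 1) + (b - a) = b + 1 by omega]
    calc cost w' (L.getD a d) ((b :: rest).map fun j => L.getD j d)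
        = w' (L.getD a d) (L.getD b d) + cost w' (L.getD b d) (rest.map fun j => L.getD j d) := rfl
      _ ≤ cost w (L.getD a d) ((L.drop (a+1)).take (b - a)) +
            cost w (L.getD b d) ((L.drop (b+1)).take (c - b)) := add_le_add h1 h2
      _ = cost w (L.getD a d) ((L.drop (a+1)).take ((b :: rest).getLastD a - a)) := by
          rw [List.getLastD_cons, ← hc, hsplit, cost_append, hseglast]


/-- If a directed graph contains a negative-weight cycle reachable from `r`, `C` is
such a cycle with the minimum number `q` of hops, `q > 2Γ`, and the canonical
replacement cycle `C̃` (same hop count, weight at most that of `C`) has sampled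
vertices spaced at most `Γ` hops apart, then the sampled vertices on `C̃`, in cyclic
order, form a negative-weight cycle in the virtual digraph `G'` whose arcs are
weighted by `Γ`-hop-limited distances in `G`. -/
theorem sampled_negative_cycle [Fintype V] [DecidableEq V]
    (w : V → V → EReal) (hnb : ∀ u v, w u v ≠ ⊥)
    (V' : Finset V) (Γ : ℕ) (hΓ : 1 ≤ Γ)
    (r : V)
    (c0 : V) (pC : List V)
    (hCne : pC ≠ []) (hCcyc : last c0 pC = c0) (hCneg : cost w c0 pC < 0)
    (hreach : dist w r c0 ≠ ⊤)
    (hminhops : ∀ (v : V) (p : List V), p ≠ [] → last v p = v → cost w v p < 0 →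
      pC.length ≤ p.length)
    (hq : 2 * Γ < pC.length)
    (pT : List V)
    (hTlen : pT.length = pC.length) (hTcyc : last c0 pT = c0)
    (hTle : cost w c0 pT ≤ cost w c0 pC)
    (js : List ℕ)
    (hjs : js.Chain' (fun a b => a < b ∧ b - a ≤ Γ))
    (hjs0 : js.head? = some 0) (hjsq : js.getLast? = some pC.length)
    (hjsV' : ∀ j ∈ js, ((c0 :: pT).getD j c0) ∈ V')
    (w' : V → V → EReal)
    (hw' : ∀ u v, w' u v = if u ∈ V' ∧ v ∈ V' then hdist w Γ u v else ⊤) :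
    (js.drop 1).map (fun j => (c0 :: pT).getD j c0) ≠ [] ∧
    last c0 ((js.drop 1).map (fun j => (c0 :: pT).getD j c0)) = c0 ∧
    cost w' c0 ((js.drop 1).map (fun j => (c0 :: pT).getD j c0)) < 0 := by
  -- decompose js
  obtain ⟨a, rest, rfl⟩ : ∃ a rest, js = a :: rest := by
    cases js with
    | nil => simp at hjs0
    | cons a rest => exact ⟨a, rest, rfl⟩
  obtain rfl : a = 0 := by simpa using hjs0
  have hq0 : 0 < pC.length := by omega
  have hrest : rest ≠ [] := by
    rintro rfl
    simp at hjsq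
    omega
  obtain ⟨b, rest', rfl⟩ : ∃ b rest', rest = b :: rest' := by
    cases rest with
    | nil => exact absurd rfl hrest
    | cons b rest' => exact ⟨b, rest', rfl⟩
  have hlastrest : (b :: rest').getLast? = some pC.length := by
    rwa [List.getLast?_cons_cons] at hjsq
  have hlastD : (b :: rest').getLastD 0 = pC.length := by
    rw [List.getLastD_eq_getLast?, hlastrest]; rfl
  have hjsD : (0 :: b :: rest').getLastD 0 = pC.length := by
    rw [List.getLastD_cons, List.getLastD_eq_getLast?, hlastrest]; rfl
  have hchainlt : (0 :: b :: rest').Chain' (fun x y => x < y) :=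
    hjs.imp fun _ _ hp => hp.1
  have hmem : ∀ x ∈ (0 : ℕ) :: b :: rest', x < (c0 :: pT).length := by
    intro x hx
    have := mem_le_getLastD_of_chain _ 0 hchainlt x hx
    rw [hjsD] at this
    simp only [List.length_cons, hTlen]
    omega
  have key := sampled_cost_le w Γ V' w' hw' (c0 :: pT) c0 (b :: rest') 0 hjs hmem hjsV'
  have hD0 : (c0 :: pT).getD 0 c0 = c0 := rfl
  rw [hD0, hlastD, Nat.sub_zero] at key
  have hdrop : (c0 :: pT).drop 1 = pT := rfl
  rw [hdrop, ← hTlen, List.take_length] at key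
  have hfq : (c0 :: pT).getD pC.length c0 = c0 := by
    rw [← hTlen, getD_length, hTcyc]
  refine ⟨by simp, ?_, ?_⟩
  · -- last of sampled list is c0
    rw [last_eq_getLastD, List.getLastD_eq_getLast?]
    have : ((b :: rest').map fun j => (c0 :: pT).getD j c0).getLast? =
        some ((c0 :: pT).getD pC.length c0) := by
      rw [List.getLast?_map, hlastrest]; rfl
    rw [show List.drop 1 (0 :: b :: rest') = b :: rest' from rfl, this]
    exact hfq
  · calc cost w' c0 (((0 :: b :: rest').drop 1).map fun j => (c0 :: pT).getD j c0)
        ≤ cost w c0 pT := key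
      _ ≤ cost w c0 pC := hTle
      _ < 0 := hCneg


end Stmt16
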